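/- (Mean value theorem for Clarke gradients.) Let x, y ∈ ℝ^m and let f : ℝ^m → ℝ be Lipschitz on a neighborhood of the segment [x,y] = { λx + (1−λ)y : λ ∈ [0,1] }. Then there exists a point z in the open segment between x and y such that f(y) − f(x) ∈ { ⟨ζ, y − x⟩ : ζ ∈ ∂f(z) }. -/

import Mathlib

open RealInnerProductSpace Filter Topology

/-- The Clarke generalized directional derivative
`f°(p; v) = limsup_{q → p, t ↓ 0} (f(q + t v) − f(q)) / t`. -/
noncomputable def cDD {F : Type*} [NormedAddCommGroup F] [NormedSpace ℝ F]
    (f : F → ℝ) (p v : F) : ℝ :=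
  Filter.limsup (fun qt : F × ℝ => (f (qt.1 + qt.2 • v) - f qt.1) / qt.2)
    ((nhds p) ×ˢ (nhdsWithin 0 (Set.Ioi 0)))

/-- The Clarke generalized gradient `∂f(p) = {ζ : ⟨ζ, v⟩ ≤ f°(p; v) for all v}`. -/
noncomputable def clarkeGrad {F : Type*} [NormedAddCommGroup F] [InnerProductSpace ℝ F]
    (f : F → ℝ) (p : F) : Set F :=
  { ζ | ∀ v, ⟪ζ, v⟫ ≤ cDD f p v }

namespace ClarkeMVT

variable {F : Type*} [NormedAddCommGroup F] [NormedSpace ℝ F]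

/-- Difference quotient. -/
noncomputable def qd (f : F → ℝ) (v : F) (qt : F × ℝ) : ℝ := (f (qt.1 + qt.2 • v) - f qt.1) / qt.2

/-- The base filter. -/
def pt (p : F) : Filter (F × ℝ) := (nhds p) ×ˢ (nhdsWithin 0 (Set.Ioi 0))

instance (p : F) : (pt p).NeBot := by
  unfold pt; infer_instance

lemma cDD_eq (f : F → ℝ) (p v : F) : cDD f p v = Filter.limsup (qd f v) (pt p) := rfl

lemma ev_pos (p : F) : ∀ᶠ qt in pt p, 0 < qt.2 := by
  have h : ∀ᶠ t in 𝓝[>] (0:ℝ), 0 < t := eventually_mem_nhdsWithin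
  exact ((Filter.Eventually.prod_mk (Eventually.of_forall fun _ : F => True.intro) h)).mono
    fun qt hqt => hqt.2

variable {f : F → ℝ} {U : Set F} {K : NNReal} {p : F}

lemma ev_bound (hU : IsOpen U) (hf : LipschitzOnWith K f U) (hp : p ∈ U) (v : F) :
    ∀ᶠ qt in pt p, |qd f v qt| ≤ K * ‖v‖ := by
  obtain ⟨ε, ε0, hball⟩ := Metric.isOpen_iff.1 hU p hp
  have hv : (0:ℝ) < ‖v‖ + 1 := by positivity
  set δ := ε / (2 * (‖v‖ + 1)) with hδ
  have hδ0 : 0 < δ := by positivity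
  have h1 : ∀ᶠ q in 𝓝 p, q ∈ Metric.ball p (ε/2) := Metric.ball_mem_nhds p (by positivity)
  have h2 : ∀ᶠ t in 𝓝[>] (0:ℝ), t ∈ Set.Ioo 0 δ :=
    eventually_of_mem (Ioo_mem_nhdsGT_of_mem ⟨le_refl 0, hδ0⟩) fun t ht => ht
  refine (h1.prod_mk h2).mono ?_
  rintro ⟨q, t⟩ ⟨hq, ht0, htδ⟩
  simp only [Metric.mem_ball] at hq
  have hqU : q ∈ U := hball (by simp [Metric.mem_ball]; linarith [hq])
  have htv : ‖t • v‖ < ε / 2 := by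
    rw [norm_smul, Real.norm_eq_abs, abs_of_pos ht0]
    have h3 : t * ‖v‖ ≤ t * (‖v‖ + 1) := by nlinarith [ht0.le]
    have h4 : t * (‖v‖ + 1) < δ * (‖v‖ + 1) := by nlinarith
    have h5 : δ * (‖v‖ + 1) = ε / 2 := by
      rw [hδ]; field_simp
    linarith
  have hq'U : q + t • v ∈ U := by
    apply hball
    have := dist_triangle (q + t • v) q p
    have hd : dist (q + t • v) q = ‖t • v‖ := by
      rw [dist_eq_norm]; simp
    simp only [Metric.mem_ball]
    rw [dist_eq_norm] at hq ⊢
    calc ‖q + t • v - p‖ ≤ ‖t • v‖ + ‖q - p‖ := by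
          have : q + t • v - p = t • v + (q - p) := by abel
          rw [this]; exact norm_add_le _ _
      _ < ε/2 + ε/2 := by linarith
      _ = ε := by ring
  have hlip : |f (q + t • v) - f q| ≤ K * (t * ‖v‖) := by
    have := hf.dist_le_mul _ hq'U _ hqU
    rw [Real.dist_eq, dist_eq_norm] at this
    have harg : q + t • v - q = t • v := by abel
    rw [harg, norm_smul, Real.norm_eq_abs, abs_of_pos ht0] at this
    exact this
  show |(f (q + t • v) - f q) / t| ≤ K * ‖v‖
  rw [abs_div, abs_of_pos ht0, div_le_iff₀ ht0]
  calc |f (q + t • v) - f q| ≤ K * (t * ‖v‖) := hlip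
    _ = K * ‖v‖ * t := by ring

lemma comp_bounds {α : Type*} {l : Filter α} [l.NeBot] {φ : α → F × ℝ}
    (hφ : Tendsto φ l (pt p)) (hU : IsOpen U) (hf : LipschitzOnWith K f U) (hp : p ∈ U) (v : F) :
    IsBoundedUnder (· ≤ ·) l (fun a => qd f v (φ a)) ∧
      IsCoboundedUnder (· ≤ ·) l (fun a => qd f v (φ a)) ∧
      IsBoundedUnder (· ≥ ·) l (fun a => qd f v (φ a)) := by
  have h := hφ.eventually (ev_bound hU hf hp v)
  have hb : IsBoundedUnder (· ≤ ·) l (fun a => qd f v (φ a)) :=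
    ⟨K * ‖v‖, eventually_map.2 (h.mono fun a ha => (abs_le.1 ha).2)⟩
  have hg : IsBoundedUnder (· ≥ ·) l (fun a => qd f v (φ a)) :=
    ⟨-(K * ‖v‖), eventually_map.2 (h.mono fun a ha => (abs_le.1 ha).1)⟩
  exact ⟨hb, hg.isCoboundedUnder_le, hg⟩

lemma base_bounds (hU : IsOpen U) (hf : LipschitzOnWith K f U) (hp : p ∈ U) (v : F) :
    IsBoundedUnder (· ≤ ·) (pt p) (qd f v) ∧
      IsCoboundedUnder (· ≤ ·) (pt p) (qd f v) ∧
      IsBoundedUnder (· ≥ ·) (pt p) (qd f v) :=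
  comp_bounds (φ := id) tendsto_id hU hf hp v

lemma limsup_comp_le {α β : Type*} {u : β → ℝ} {l : Filter α} {l' : Filter β} {φ : α → β}
    (hφ : Tendsto φ l l') (hcb : IsCoboundedUnder (· ≤ ·) l (fun a => u (φ a)))
    (hb : IsBoundedUnder (· ≤ ·) l' u) :
    limsup (fun a => u (φ a)) l ≤ limsup u l' := by
  refine le_of_forall_gt_imp_ge_of_dense fun b hb' => limsup_le_of_le hcb ?_
  filter_upwards [hφ.eventually (eventually_lt_of_limsup_lt hb' hb)] with a ha using ha.le

lemma pt_le (p : F) : pt p ≤ 𝓝 p ×ˢ 𝓝 (0:ℝ) :=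
  Filter.prod_mono le_rfl nhdsWithin_le_nhds

lemma tendsto_shift (v : F) (p : F) :
    Tendsto (fun qt : F × ℝ => (qt.1 + qt.2 • v, qt.2)) (pt p) (pt p) := by
  refine Tendsto.prodMk ?_ tendsto_snd
  have h1 : Tendsto (fun qt : F × ℝ => qt.1 + qt.2 • v) (𝓝 p ×ˢ 𝓝 (0:ℝ)) (𝓝 (p + (0:ℝ) • v)) := by
    rw [← nhds_prod_eq]
    exact (continuous_fst.add (continuous_snd.smul continuous_const)).tendsto (p, (0:ℝ))
  have h2 := h1.mono_left (pt_le p)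
  simpa using h2

lemma cDD_zero (p : F) (f : F → ℝ) : cDD f p 0 = 0 := by
  rw [cDD_eq]
  have h : qd f (0 : F) = fun _ : F × ℝ => (0:ℝ) := by
    funext qt; simp [qd]
  rw [h, limsup_const]

lemma cDD_add_le (hU : IsOpen U) (hf : LipschitzOnWith K f U) (hp : p ∈ U) (v w : F) :
    cDD f p (v + w) ≤ cDD f p v + cDD f p w := by
  set φ : F × ℝ → F × ℝ := fun qt => (qt.1 + qt.2 • v, qt.2) with hφdef
  have hφ : Tendsto φ (pt p) (pt p) := tendsto_shift v p
  have key : qd f (v + w) = fun qt => qd f w (φ qt) + qd f v qt := by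
    funext qt
    simp only [qd, φ]
    have h1 : qt.1 + qt.2 • (v + w) = qt.1 + qt.2 • v + qt.2 • w := by
      rw [smul_add, add_assoc]
    rw [h1, ← add_div, sub_add_sub_cancel]
  obtain ⟨hb1, hcb1, hg1⟩ := comp_bounds hφ hU hf hp w
  obtain ⟨hb2, hcb2, hg2⟩ := base_bounds hU hf hp v
  rw [cDD_eq, key]
  have hadd : limsup (fun qt => qd f w (φ qt) + qd f v qt) (pt p) ≤
      limsup (fun qt => qd f w (φ qt)) (pt p) + limsup (qd f v) (pt p) :=
    limsup_add_le hg1 hb1 hcb2 hb2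
  have hcomp : limsup (fun qt => qd f w (φ qt)) (pt p) ≤ limsup (qd f w) (pt p) :=
    limsup_comp_le hφ hcb1 (base_bounds hU hf hp w).1
  calc limsup (fun qt => qd f w (φ qt) + qd f v qt) (pt p)
      ≤ limsup (fun qt => qd f w (φ qt)) (pt p) + limsup (qd f v) (pt p) := hadd
    _ ≤ limsup (qd f w) (pt p) + limsup (qd f v) (pt p) := by linarith
    _ = cDD f p v + cDD f p w := by rw [cDD_eq, cDD_eq]; ring

lemma cDD_smul_le (hU : IsOpen U) (hf : LipschitzOnWith K f U) (hp : p ∈ U)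
    {c : ℝ} (hc : 0 < c) (v : F) :
    cDD f p (c • v) ≤ c * cDD f p v := by
  set φ : F × ℝ → F × ℝ := fun qt => (qt.1, c * qt.2) with hφdef
  have hφ : Tendsto φ (pt p) (pt p) := by
    refine Tendsto.prodMk tendsto_fst ?_
    rw [tendsto_nhdsWithin_iff]
    constructor
    · have h1 : Tendsto (fun qt : F × ℝ => c * qt.2) (𝓝 p ×ˢ 𝓝 (0:ℝ)) (𝓝 (c * 0)) := by
        rw [← nhds_prod_eq]
        exact (continuous_const.mul continuous_snd).tendsto (p, (0:ℝ))
      have h2 := h1.mono_left (pt_le p)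
      simpa using h2
    · exact (ev_pos p).mono fun qt hqt => mul_pos hc hqt
  have key : ∀ᶠ qt in pt p, qd f (c • v) qt = c * qd f v (φ qt) := by
    filter_upwards [ev_pos p] with qt ht
    simp only [qd, φ]
    have h1 : qt.2 • (c • v) = (c * qt.2) • v := by rw [smul_smul, mul_comm]
    rw [h1]
    field_simp
  rw [cDD_eq, limsup_congr key]
  obtain ⟨hb, hcb, hg⟩ := comp_bounds hφ hU hf hp v
  refine le_of_forall_gt_imp_ge_of_dense fun b hb' => ?_
  have hcDD : limsup (qd f v) (pt p) < b / c := by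
    rw [lt_div_iff₀ hc]
    calc limsup (qd f v) (pt p) * c = c * cDD f p v := by rw [cDD_eq]; ring
      _ < b := hb'
  have hev : ∀ᶠ qt in pt p, qd f v (φ qt) < b / c :=
    hφ.eventually (eventually_lt_of_limsup_lt hcDD (base_bounds hU hf hp v).1)
  have hcb' : IsCoboundedUnder (· ≤ ·) (pt p) (fun qt => c * qd f v (φ qt)) := by
    refine IsBoundedUnder.isCoboundedUnder_le ?_
    exact ⟨c * (-(K * ‖v‖)), eventually_map.2 (((hφ.eventually (ev_bound hU hf hp v))).mono
      fun a ha => mul_le_mul_of_nonneg_left (abs_le.1 ha).1 hc.le)⟩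
  refine limsup_le_of_le hcb' ?_
  filter_upwards [hev] with qt hqt
  exact ((lt_div_iff₀' hc).1 hqt).le

lemma cDD_smul (hU : IsOpen U) (hf : LipschitzOnWith K f U) (hp : p ∈ U)
    {c : ℝ} (hc : 0 < c) (v : F) :
    cDD f p (c • v) = c * cDD f p v := by
  refine le_antisymm (cDD_smul_le hU hf hp hc v) ?_
  have h2 := cDD_smul_le hU hf hp (inv_pos.2 hc) (c • v)
  rw [inv_smul_smul₀ hc.ne'] at h2
  calc c * cDD f p v ≤ c * (c⁻¹ * cDD f p (c • v)) := mul_le_mul_of_nonneg_left h2 hc.le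
    _ = cDD f p (c • v) := by field_simp

lemma localmin_cDD_nonneg {g : ℝ → ℝ} {V : Set ℝ} {K' : NNReal} {t0 : ℝ}
    (hV : IsOpen V) (hg : LipschitzOnWith K' g V) (ht : t0 ∈ V)
    (hmin : IsLocalMin g t0) (s : ℝ) : 0 ≤ cDD g t0 s := by
  have hψ : Tendsto (fun r : ℝ => ((t0 : ℝ), r)) (𝓝[>] (0:ℝ)) (pt t0) :=
    Tendsto.prodMk tendsto_const_nhds (by exact fun _ h => h)
  obtain ⟨hb, hcb, hgb⟩ := comp_bounds hψ hV hg ht s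
  have h1 : limsup (fun r => qd g s ((t0 : ℝ), r)) (𝓝[>] (0:ℝ)) ≤ cDD g t0 s := by
    rw [cDD_eq]
    exact limsup_comp_le hψ hcb (base_bounds hV hg ht s).1
  refine le_trans ?_ h1
  refine le_limsup_of_frequently_le ?_ hb
  have hcont : Tendsto (fun r : ℝ => t0 + r • s) (𝓝[>] (0:ℝ)) (𝓝 t0) := by
    have h : Tendsto (fun r : ℝ => t0 + r • s) (𝓝 (0:ℝ)) (𝓝 (t0 + (0:ℝ) • s)) :=
      (continuous_const.add (continuous_id.smul continuous_const)).tendsto (0:ℝ)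
    have h2 := h.mono_left (nhdsWithin_le_nhds (s := Set.Ioi (0:ℝ)))
    simpa using h2
  have hev : ∀ᶠ r in 𝓝[>] (0:ℝ), 0 ≤ qd g s ((t0 : ℝ), r) := by
    filter_upwards [hcont.eventually hmin, eventually_mem_nhdsWithin] with r h2 hr
    exact div_nonneg (sub_nonneg.2 h2) (le_of_lt hr)
  exact hev.frequently

lemma cDD_neg_le {g : ℝ → ℝ} {V : Set ℝ} {K' : NNReal} {t0 : ℝ}
    (hV : IsOpen V) (hg : LipschitzOnWith K' g V) (ht : t0 ∈ V) (s : ℝ) :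
    cDD (fun t => -g t) t0 s ≤ cDD g t0 (-s) := by
  set φ : ℝ × ℝ → ℝ × ℝ := fun qt => (qt.1 + qt.2 • s, qt.2) with hφdef
  have hφ : Tendsto φ (pt t0) (pt t0) := tendsto_shift s t0
  have key : qd (fun t => -g t) s = fun qt => qd g (-s) (φ qt) := by
    funext qt
    simp only [qd, φ]
    have h1 : qt.1 + qt.2 • s + qt.2 • (-s) = qt.1 := by
      rw [smul_neg]; abel
    rw [h1]
    ring
  rw [cDD_eq, key]
  exact limsup_comp_le hφ (comp_bounds hφ hV hg ht (-s)).2.1 (base_bounds hV hg ht (-s)).1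

lemma cDD_line_le {f : F → ℝ} {U : Set F} {K : NNReal} (hU : IsOpen U)
    (hf : LipschitzOnWith K f U) (x w : F) {t0 : ℝ} (hz : x + t0 • w ∈ U) (s c : ℝ) :
    cDD (fun t : ℝ => f (x + t • w) + t * c) t0 s ≤ cDD f (x + t0 • w) (s • w) + s * c := by
  set χ : ℝ × ℝ → F × ℝ := fun qt => (x + qt.1 • w, qt.2) with hχdef
  have hχ : Tendsto χ (pt t0) (pt (x + t0 • w)) := by
    refine Tendsto.prodMk ?_ tendsto_snd
    have h : Tendsto (fun q : ℝ => x + q • w) (𝓝 t0) (𝓝 (x + t0 • w)) :=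
      (continuous_const.add (continuous_id.smul continuous_const)).tendsto t0
    exact h.comp tendsto_fst
  have key : ∀ᶠ qt in pt t0,
      qd (fun t : ℝ => f (x + t • w) + t * c) s qt = qd f (s • w) (χ qt) + s * c := by
    filter_upwards [ev_pos t0] with qt ht
    simp only [qd, χ]
    have h1 : x + (qt.1 + qt.2 • s) • w = x + qt.1 • w + qt.2 • (s • w) := by
      rw [add_smul, smul_smul, smul_eq_mul, add_assoc]
    rw [h1]
    simp only [smul_eq_mul]
    field_simp
    ring
  rw [cDD_eq, limsup_congr key]
  obtain ⟨hb, hcb, hg⟩ := comp_bounds hχ hU hf hz (s • w)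
  have h2 : limsup (fun qt => qd f (s • w) (χ qt) + s * c) (pt t0) =
      limsup (fun qt => qd f (s • w) (χ qt)) (pt t0) + s * c :=
    limsup_add_const _ _ _ hb hcb
  rw [h2]
  have h3 : limsup (fun qt => qd f (s • w) (χ qt)) (pt t0) ≤ cDD f (x + t0 • w) (s • w) := by
    rw [cDD_eq]
    exact limsup_comp_le hχ hcb (base_bounds hU hf hz (s • w)).1
  linarith

lemma exists_extremum {g : ℝ → ℝ} {V : Set ℝ} (hV : IsOpen V) (hIcc : Set.Icc (0:ℝ) 1 ⊆ V)
    (hg : ContinuousOn g V) (h01 : g 0 = g 1) :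
    ∃ t0 ∈ Set.Ioo (0:ℝ) 1, IsLocalMin g t0 ∨ IsLocalMax g t0 := by
  have hne : (Set.Icc (0:ℝ) 1).Nonempty := Set.nonempty_Icc.2 zero_le_one
  have hgc : ContinuousOn g (Set.Icc 0 1) := hg.mono hIcc
  obtain ⟨a, haI, ha⟩ := isCompact_Icc.exists_isMaxOn hne hgc
  obtain ⟨b, hbI, hb⟩ := isCompact_Icc.exists_isMinOn hne hgc
  have h0I : (0:ℝ) ∈ Set.Icc (0:ℝ) 1 := Set.left_mem_Icc.2 zero_le_one
  have h1I : (1:ℝ) ∈ Set.Icc (0:ℝ) 1 := Set.right_mem_Icc.2 zero_le_one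
  by_cases hA : g 0 < g a
  · have ha0 : a ≠ 0 := fun h => by rw [h] at hA; exact lt_irrefl _ hA
    have ha1 : a ≠ 1 := fun h => by rw [h, ← h01] at hA; exact lt_irrefl _ hA
    have haIoo : a ∈ Set.Ioo (0:ℝ) 1 :=
      ⟨lt_of_le_of_ne haI.1 (Ne.symm ha0), lt_of_le_of_ne haI.2 ha1⟩
    exact ⟨a, haIoo, Or.inr (ha.isLocalMax (Icc_mem_nhds haIoo.1 haIoo.2))⟩
  · by_cases hB : g b < g 0
    · have hb0 : b ≠ 0 := fun h => by rw [h] at hB; exact lt_irrefl _ hB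
      have hb1 : b ≠ 1 := fun h => by rw [h, ← h01] at hB; exact lt_irrefl _ hB
      have hbIoo : b ∈ Set.Ioo (0:ℝ) 1 :=
        ⟨lt_of_le_of_ne hbI.1 (Ne.symm hb0), lt_of_le_of_ne hbI.2 hb1⟩
      exact ⟨b, hbIoo, Or.inl (hb.isLocalMin (Icc_mem_nhds hbIoo.1 hbIoo.2))⟩
    · push_neg at hA hB
      have hhalfI : (1/2 : ℝ) ∈ Set.Icc (0:ℝ) 1 := by norm_num
      have hmin : IsMinOn g (Set.Icc (0:ℝ) 1) (1/2) := by
        intro t htI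
        have h1 : g (1/2) ≤ g a := ha hhalfI
        have h2 : g 0 ≤ g t := le_trans hB (hb htI)
        have h3 : g (1/2) ≤ g 0 := le_trans h1 hA
        exact le_trans h3 h2
      exact ⟨1/2, by norm_num, Or.inl (hmin.isLocalMin (Icc_mem_nhds (by norm_num) (by norm_num)))⟩

end ClarkeMVT

open ClarkeMVT in
/-- (Mean value theorem for Clarke gradients.) If `f` is Lipschitz on a
neighborhood of the segment `[x,y]`, then there is a point `z = x + t(y − x)`, `t ∈ (0,1)`,
in the open segment with `f(y) − f(x) ∈ ⟨∂f(z), y − x⟩`. -/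
theorem clarke_mean_value {m : ℕ} (f : EuclideanSpace ℝ (Fin m) → ℝ)
    (x y : EuclideanSpace ℝ (Fin m))
    (hf : ∃ U : Set (EuclideanSpace ℝ (Fin m)), IsOpen U ∧ segment ℝ x y ⊆ U ∧
      ∃ K : NNReal, LipschitzOnWith K f U) :
    ∃ t ∈ Set.Ioo (0 : ℝ) 1,
      f y - f x ∈ {r : ℝ | ∃ ζ ∈ clarkeGrad f (x + t • (y - x)), r = ⟪ζ, y - x⟫} := by
  classical
  obtain ⟨U, hU, hseg, K, hfl⟩ := hf
  set w : EuclideanSpace ℝ (Fin m) := y - x with hw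
  set c : ℝ := f x - f y with hc
  set g : ℝ → ℝ := fun t => f (x + t • w) + t * c with hg
  set V : Set ℝ := (fun t : ℝ => x + t • w) ⁻¹' U with hV
  have hcont_aff : Continuous (fun t : ℝ => x + t • w) :=
    continuous_const.add (continuous_id.smul continuous_const)
  have hVopen : IsOpen V := hU.preimage hcont_aff
  have hIccV : Set.Icc (0:ℝ) 1 ⊆ V := by
    intro t ht
    apply hseg
    rw [segment_eq_image']
    exact ⟨t, ht, rfl⟩
  -- Lipschitz bound for `g` on `V`
  have hxw : LipschitzWith ‖w‖₊ (fun t : ℝ => x + t • w) := by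
    refine LipschitzWith.of_dist_le_mul fun a b => ?_
    rw [dist_add_left, dist_eq_norm, ← sub_smul, norm_smul, Real.norm_eq_abs,
      ← Real.dist_eq, dist_comm, Real.dist_eq]
    rw [coe_nnnorm, mul_comm, abs_sub_comm]
  have h1l : LipschitzOnWith (K * ‖w‖₊) (fun t : ℝ => f (x + t • w)) V :=
    hfl.comp (hxw.lipschitzOnWith (s := V)) (fun t ht => ht)
  have h2l : LipschitzWith ‖c‖₊ (fun t : ℝ => t * c) := by
    refine LipschitzWith.of_dist_le_mul fun a b => ?_
    rw [Real.dist_eq, Real.dist_eq, ← sub_mul, abs_mul, coe_nnnorm, Real.norm_eq_abs]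
    rw [mul_comm]
  have hgl : LipschitzOnWith (K * ‖w‖₊ + ‖c‖₊) g V := by
    refine LipschitzOnWith.of_dist_le_mul fun a ha b hb => ?_
    have e1 := h1l.dist_le_mul a ha b hb
    have e2 := h2l.dist_le_mul a b
    have e3 : dist (g a) (g b) ≤
        dist (f (x + a • w)) (f (x + b • w)) + dist (a * c) (b * c) := by
      simp only [g, Real.dist_eq]
      have : f (x + a • w) + a * c - (f (x + b • w) + b * c) =
          (f (x + a • w) - f (x + b • w)) + (a * c - b * c) := by ring
      rw [this]
      exact abs_add_le _ _
    have e4 : ((K * ‖w‖₊ + ‖c‖₊ : NNReal) : ℝ) = (K * ‖w‖₊ : NNReal) * 1 + ‖c‖₊ := by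
      push_cast; ring
    calc dist (g a) (g b)
        ≤ dist (f (x + a • w)) (f (x + b • w)) + dist (a * c) (b * c) := e3
      _ ≤ (K * ‖w‖₊ : NNReal) * dist a b + (‖c‖₊ : ℝ) * dist a b := by
          exact add_le_add e1 e2
      _ = ((K * ‖w‖₊ + ‖c‖₊ : NNReal) : ℝ) * dist a b := by push_cast; ring
  -- interior extremum of g
  have hgcont : ContinuousOn g V := by
    refine ContinuousOn.add ?_ (Continuous.continuousOn (by fun_prop))
    exact hfl.continuousOn.comp hcont_aff.continuousOn (fun t ht => ht)
  have hg01 : g 0 = g 1 := by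
    have h0 : g 0 = f x := by simp [g]
    have h1 : g 1 = f x := by
      have hxy : x + (1:ℝ) • w = y := by
        rw [one_smul, hw]; abel
      show f (x + (1:ℝ) • w) + 1 * c = f x
      rw [hxy, hc]; ring
    rw [h0, h1]
  obtain ⟨t0, ht0Ioo, hext⟩ := exists_extremum hVopen hIccV hgcont hg01
  have ht0V : t0 ∈ V := hIccV ⟨ht0Ioo.1.le, ht0Ioo.2.le⟩
  have hzU : x + t0 • w ∈ U := ht0V
  set z : EuclideanSpace ℝ (Fin m) := x + t0 • w with hz
  -- derivative bounds at z
  have hkey : ∀ s : ℝ, 0 ≤ cDD g t0 s := by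
    intro s
    rcases hext with hmin | hmax
    · exact localmin_cDD_nonneg hVopen hgl ht0V hmin s
    · have hgneg : LipschitzOnWith (K * ‖w‖₊ + ‖c‖₊) (fun t => -g t) V := by
        refine LipschitzOnWith.of_dist_le_mul fun a ha b hb => ?_
        simpa [dist_neg_neg] using hgl.dist_le_mul a ha b hb
      have h1 : 0 ≤ cDD (fun t => -g t) t0 (-s) :=
        localmin_cDD_nonneg hVopen hgneg ht0V hmax.neg (-s)
      have h2 := cDD_neg_le hVopen hgl ht0V (-s)
      rw [neg_neg] at h2
      linarith
  have hr1 : f y - f x ≤ cDD f z w := by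
    have h := (hkey 1).trans (cDD_line_le hU hfl x w hzU 1 c)
    rw [one_smul, one_mul] at h
    have : f y - f x = -c := by rw [hc]; ring
    linarith
  have hr2 : -(f y - f x) ≤ cDD f z (-w) := by
    have h := (hkey (-1)).trans (cDD_line_le hU hfl x w hzU (-1) c)
    rw [neg_one_smul, neg_one_mul] at h
    have : -(f y - f x) = c := by rw [hc]; ring
    linarith
  -- Hahn–Banach
  set r : ℝ := f y - f x with hrdef
  have hNzero : cDD f z 0 = 0 := cDD_zero z f
  have hN_hom : ∀ a : ℝ, 0 < a → ∀ v : EuclideanSpace ℝ (Fin m), cDD f z (a • v) = a * cDD f z v :=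
    fun a ha v => cDD_smul hU hfl hzU ha v
  have hN_add : ∀ v u : EuclideanSpace ℝ (Fin m), cDD f z (v + u) ≤ cDD f z v + cDD f z u :=
    fun v u => cDD_add_le hU hfl hzU v u
  obtain ⟨G, hG1, hGw⟩ : ∃ G : EuclideanSpace ℝ (Fin m) →ₗ[ℝ] ℝ, (∀ v, G v ≤ cDD f z v) ∧ G w = r := by
    by_cases hwz : w = 0
    · have hr0 : r = 0 := by
        have hxy : y = x := by
          have := sub_eq_zero.1 hwz
          exact this
        rw [hrdef, hxy, sub_self]
      obtain ⟨G, _, hG⟩ := exists_extension_of_le_sublinear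
        (⟨⊥, 0⟩ : EuclideanSpace ℝ (Fin m) →ₗ.[ℝ] ℝ) (cDD f z) hN_hom hN_add
        (by
          rintro ⟨v, hv⟩
          have hv0 : v = (0 : EuclideanSpace ℝ (Fin m)) := (Submodule.mem_bot ℝ).1 hv
          simp only [LinearPMap.mk_apply, LinearMap.zero_apply]
          rw [hv0, hNzero])
      refine ⟨G, hG, ?_⟩
      rw [hwz, map_zero, hr0]
    · set pm : EuclideanSpace ℝ (Fin m) →ₗ.[ℝ] ℝ := LinearPMap.mkSpanSingleton w r hwz with hpm
      have hpmle : ∀ u : pm.domain, pm u ≤ cDD f z u := by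
        rintro ⟨u, hu⟩
        obtain ⟨a, ha⟩ := Submodule.mem_span_singleton.1 hu
        have hsub : (⟨u, hu⟩ : pm.domain) = ⟨a • w, ha ▸ hu⟩ := by
          apply Subtype.ext
          exact ha.symm
        rw [hsub]
        have happ : pm ⟨a • w, ha ▸ hu⟩ = a • r :=
          LinearPMap.mkSpanSingleton'_apply w r _ a _
        rw [happ]
        simp only [smul_eq_mul]
        rcases lt_trichotomy a 0 with hneg | hzero | hpos
        · have hrw : a • w = (-a) • (-w) := by rw [smul_neg, neg_smul, neg_neg]
          rw [hrw, hN_hom (-a) (by linarith) (-w)]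
          have := mul_le_mul_of_nonneg_left hr2 (by linarith : (0:ℝ) ≤ -a)
          calc a * r = (-a) * (-(f y - f x)) := by rw [hrdef]; ring
            _ ≤ (-a) * cDD f z (-w) := this
        · rw [hzero, zero_smul, hNzero, zero_mul]
        · rw [hN_hom a hpos w]
          calc a * r = a * (f y - f x) := by rw [hrdef]
            _ ≤ a * cDD f z w := mul_le_mul_of_nonneg_left hr1 hpos.le
      obtain ⟨G, hGext, hGle⟩ := exists_extension_of_le_sublinear pm (cDD f z) hN_hom hN_add hpmle
      refine ⟨G, hGle, ?_⟩
      have hwmem : w ∈ pm.domain := by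
        rw [hpm]
        exact Submodule.mem_span_singleton_self w
      have := hGext ⟨w, hwmem⟩
      rw [this]
      exact LinearPMap.mkSpanSingleton_apply ℝ ℝ hwz r
  -- convert to inner product representation
  let G' : EuclideanSpace ℝ (Fin m) →L[ℝ] ℝ := LinearMap.toContinuousLinearMap G
  let ζ : EuclideanSpace ℝ (Fin m) :=
    (InnerProductSpace.toDual ℝ (EuclideanSpace ℝ (Fin m))).symm G'
  have hζ : ∀ v : EuclideanSpace ℝ (Fin m), ⟪ζ, v⟫ = G v :=
    fun v => InnerProductSpace.toDual_symm_apply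
  refine ⟨t0, ht0Ioo, ζ, ?_, ?_⟩
  · intro v
    rw [hζ v]
    exact hG1 v
  · rw [hζ w, hGw]
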